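/- arXiv:1008.0189 — 3 statements merged into one kernel-verified Lean document; each statement's English description precedes it below -/
import Mathlib

section
/- Let $V$ be a finite-dimensional complex inner product space and let $E_0^*, E_1^*, \ldots, E_d^*$ be a family of orthogonal projections on $V$ with mutually orthogonal images whose sum is the identity. Let $\chi \in V$ and let $A$ be a linear operator on $V$. Suppose there exist integers $0 \le w < w+t \le d$ such that $E_w^*\chi \neq 0$, $E_k^*\chi = 0$ for $w+1 \le k \le w+t$, and for each $i \ge 0$ with $w+i \le w+t-i$ we have $E_{w+i}^*(A^i\chi) \neq 0$ and $E_k^*(A^i\chi) = 0$ for $w+i+1 \le k \le w+t-i$. Then the vectors $\chi, A\chi, A^2\chi, \ldots, A^{\lfloor t/2 \rfloor}\chi$ are linearly independent. -/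
theorem stmt_0 {V : Type*} [NormedAddCommGroup V] [InnerProductSpace ℂ V]
    [FiniteDimensional ℂ V]
    (d w t : ℕ) (ht : 1 ≤ t) (hwtd : w + t ≤ d)
    (E : ℕ → (V →ₗ[ℂ] V))
    (hidem : ∀ k, ∀ v : V, E k (E k v) = E k v)
    (hsymm : ∀ k, LinearMap.IsSymmetric (E k))
    (horth : ∀ k l, k ≠ l → ∀ v : V, E k (E l v) = 0)
    (hsum : ∀ v : V, ∑ k ∈ Finset.range (d + 1), E k v = v)
    (χ : V) (A : V →ₗ[ℂ] V)
    (h1 : E w χ ≠ 0)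
    (h2 : ∀ k, w + 1 ≤ k → k ≤ w + t → E k χ = 0)
    (h3 : ∀ i : ℕ, w + i ≤ w + t - i →
      E (w + i) ((A ^ i) χ) ≠ 0 ∧
      ∀ k, w + i + 1 ≤ k → k ≤ w + t - i → E k ((A ^ i) χ) = 0) :
    LinearIndependent ℂ (fun i : Fin (t / 2 + 1) => (A ^ (i : ℕ)) χ) := by
  classical
  have htt : 2 * (t / 2) ≤ t := by omega
  rw [Fintype.linearIndependent_iff]
  intro g hg
  by_contra hne
  push_neg at hne
  obtain ⟨i0, hi0⟩ := hne
  set S : Finset (Fin (t / 2 + 1)) := Finset.univ.filter (fun i => g i ≠ 0) with hS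
  have hSne : S.Nonempty := ⟨i0, by simp [hS, hi0]⟩
  set j : Fin (t / 2 + 1) := S.max' hSne with hj
  have hjS : j ∈ S := S.max'_mem hSne
  have hgj : g j ≠ 0 := by simpa [hS] using hjS
  have hjle : (j : ℕ) ≤ t / 2 := Nat.lt_succ_iff.mp j.isLt
  have key : E (w + (j : ℕ)) (∑ i : Fin (t / 2 + 1), g i • (A ^ (i : ℕ)) χ)
      = g j • E (w + (j : ℕ)) ((A ^ (j : ℕ)) χ) := by
    rw [map_sum]
    rw [Finset.sum_eq_single j]
    · simp
    · intro i _ hij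
      rcases lt_or_gt_of_ne hij with hlt | hgt
      · have hilt : (i : ℕ) < (j : ℕ) := hlt
        have hcond : w + (i : ℕ) ≤ w + t - (i : ℕ) := by omega
        have := (h3 (i : ℕ) hcond).2 (w + (j : ℕ)) (by omega) (by omega)
        simp [this]
      · have : i ∈ S → i ≤ j := fun h => S.le_max' i h
        have hgi : g i = 0 := by
          by_contra hgi
          have hiS : i ∈ S := by simp [hS, hgi]
          exact absurd (S.le_max' i hiS) (not_le.mpr hgt)
        simp [hgi]
    · intro h; exact absurd (Finset.mem_univ j) h
  rw [hg, map_zero] at key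
  have hEj : E (w + (j : ℕ)) ((A ^ (j : ℕ)) χ) ≠ 0 :=
    (h3 (j : ℕ) (by omega)).1
  have := (smul_eq_zero.mp key.symm).resolve_right hEj
  exact hgj this
end

section
/- Let $X \subseteq S^{d-1}$ be a finite nonempty set with degree set $A(X) = \{\langle x,y\rangle : x,y \in X, x \neq y\}$ of cardinality $s$, and let $F(x) = \prod_{\alpha \in A(X)} \frac{x - \alpha}{1 - \alpha}$ (a degree-$s$ annihilator polynomial with $F(1) = 1$). Write $F = \sum_{k=0}^{s} f_k Q_k$ in the Gegenbauer basis. Then $1 = \sum_{k=0}^{s} f_k b_k$, where $b_k = \frac{1}{|X|}\sum_{x,y \in X} Q_k(\langle x, y\rangle)$. -/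
open Polynomial

theorem stmt_13 (d : ℕ) (X : Finset (EuclideanSpace ℝ (Fin d))) (hXne : X.Nonempty)
    (hsphere : ∀ x ∈ X, ‖x‖ = 1)
    (A : Finset ℝ)
    (hA : (A : Set ℝ) = {α : ℝ | ∃ x ∈ X, ∃ y ∈ X, x ≠ y ∧ (inner ℝ x y : ℝ) = α})
    (s : ℕ) (hs : s = A.card)
    (F : Polynomial ℝ)
    (hF : F = ∏ α ∈ A, Polynomial.C (1 / (1 - α)) * (Polynomial.X - Polynomial.C α))
    (Q : ℕ → ℝ → ℝ) (f : ℕ → ℝ)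
    (hf : ∀ t : ℝ, F.eval t = ∑ k ∈ Finset.range (s + 1), f k * Q k t)
    (b : ℕ → ℝ)
    (hb : ∀ k, b k = (1 / (X.card : ℝ)) * ∑ x ∈ X, ∑ y ∈ X, Q k (inner ℝ x y : ℝ)) :
    ∑ k ∈ Finset.range (s + 1), f k * b k = 1 := by
  have hAne1 : ∀ α ∈ A, α ≠ 1 := by
    intro α hα
    have : α ∈ (A : Set ℝ) := hα
    rw [hA] at this
    obtain ⟨x, hx, y, hy, hxy, hin⟩ := this
    intro h1
    apply hxy
    rw [← inner_eq_one_iff_of_norm_eq_one (𝕜 := ℝ) (hsphere x hx) (hsphere y hy)]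
    rw [hin, h1]
  have hF1 : F.eval 1 = 1 := by
    rw [hF]
    simp only [eval_prod, eval_mul, eval_C, eval_sub, eval_X]
    apply Finset.prod_eq_one
    intro α hα
    have : (1 : ℝ) - α ≠ 0 := sub_ne_zero.mpr (Ne.symm (hAne1 α hα))
    field_simp
  have hFα : ∀ α ∈ A, F.eval α = 0 := by
    intro α hα
    rw [hF]
    simp only [eval_prod, eval_mul, eval_C, eval_sub, eval_X]
    apply Finset.prod_eq_zero hα
    simp
  -- main computation
  have key : ∑ x ∈ X, ∑ y ∈ X, F.eval (inner ℝ x y : ℝ) = (X.card : ℝ) := by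
    have : ∀ x ∈ X, ∑ y ∈ X, F.eval (inner ℝ x y : ℝ) = 1 := by
      intro x hx
      rw [Finset.sum_eq_single x]
      · have : (inner ℝ x x : ℝ) = 1 := by
          rw [real_inner_self_eq_norm_sq, hsphere x hx]; norm_num
        rw [this, hF1]
      · intro y hy hyx
        apply hFα
        have : (inner ℝ x y : ℝ) ∈ (A : Set ℝ) := by
          rw [hA]
          exact ⟨x, hx, y, hy, Ne.symm hyx, rfl⟩
        exact this
      · intro h; exact absurd hx h
    rw [Finset.sum_congr rfl this]
    simp
  have hcard : (X.card : ℝ) ≠ 0 := by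
    simp [Finset.card_ne_zero_of_mem hXne.choose_spec]
  have step : ∑ k ∈ Finset.range (s + 1), f k * ∑ x ∈ X, ∑ y ∈ X, Q k (inner ℝ x y : ℝ)
      = ∑ x ∈ X, ∑ y ∈ X, F.eval (inner ℝ x y : ℝ) := by
    simp only [hf, Finset.mul_sum]
    rw [Finset.sum_comm]
    refine Finset.sum_congr rfl fun x _ => ?_
    rw [Finset.sum_comm]
  have pull : ∑ k ∈ Finset.range (s + 1), f k * b k
      = (1 / (X.card : ℝ)) * ∑ k ∈ Finset.range (s + 1),
          f k * ∑ x ∈ X, ∑ y ∈ X, Q k (inner ℝ x y : ℝ) := by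
    simp only [hb, Finset.mul_sum]
    refine Finset.sum_congr rfl fun k _ => Finset.sum_congr rfl fun a _ =>
      Finset.sum_congr rfl fun c _ => by ring
  rw [pull, step, key]
  field_simp
end

section
/- Let $X \subseteq S^{d-1}$ be a finite nonempty set with degree $s$ (i.e., $|\{\langle x,y\rangle : x \ne y \in X\}| = s$) and suppose the sequence $b_k = \frac{1}{|X|}\sum_{x,y\in X} Q_k(\langle x,y\rangle)$ satisfies $b_w > 0$ and $b_{w+1} = \cdots = b_{w+t} = 0$ for some $w \ge 0$, $t \ge 1$, with $w + t + 1 \le$ any index where $b$ is next nonzero. Then $t \le 2s$. -/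
open Polynomial

/-- The Gegenbauer polynomials on `S^{d-1}`, normalized as in Delsarte–Goethals–Seidel:
`Q_0 = 1`, `Q_1 = d·x`, and
`((k+1)/(d+2k)) Q_{k+1} = x Q_k - ((d+k-3)/(d+2k-4)) Q_{k-1}` for `k ≥ 1`. -/
noncomputable def gegenbauer (d : ℕ) : ℕ → Polynomial ℝ
  | 0 => 1
  | 1 => Polynomial.C (d : ℝ) * Polynomial.X
  | (m + 2) =>
      Polynomial.C (((d : ℝ) + 2 * (m : ℝ) + 2) / ((m : ℝ) + 2)) *
        (Polynomial.X * gegenbauer d (m + 1) -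
          Polynomial.C (((d : ℝ) + (m : ℝ) - 2) / ((d : ℝ) + 2 * (m : ℝ) - 2)) *
            gegenbauer d m)

lemma geg_eval_one_pos (d : ℕ) (hd : 3 ≤ d) : ∀ k : ℕ,
    0 < (gegenbauer d k).eval 1 ∧
      ((k : ℝ) + 1) * (2 * k + d - 2) * (gegenbauer d (k + 1)).eval 1 =
        (2 * k + d) * ((k : ℝ) + d - 2) * (gegenbauer d k).eval 1 := by
  have hd3 : (3 : ℝ) ≤ d := by exact_mod_cast hd
  intro k
  induction k with
  | zero =>
    constructor
    · simp [gegenbauer]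
    · simp [gegenbauer]; ring
  | succ n ih =>
    obtain ⟨hpos, hrat⟩ := ih
    have hn : (0:ℝ) ≤ n := n.cast_nonneg
    have hA : (0:ℝ) < ((n:ℝ) + 1) * (2 * n + d - 2) := by nlinarith
    have hB : (0:ℝ) < (2 * (n:ℝ) + d) * ((n:ℝ) + d - 2) := by nlinarith
    have h1 : 0 < (gegenbauer d (n + 1)).eval 1 := by
      have : (gegenbauer d (n+1)).eval 1
          = ((2 * (n:ℝ) + d) * ((n:ℝ) + d - 2) * (gegenbauer d n).eval 1)
            / (((n:ℝ) + 1) * (2 * n + d - 2)) := by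
        rw [eq_div_iff (ne_of_gt hA)]; linear_combination hrat
      rw [this]
      exact div_pos (mul_pos hB hpos) hA
    refine ⟨h1, ?_⟩
    have h2 : ((n:ℝ)+2) ≠ 0 := by positivity
    have h3 : ((d:ℝ)+2*n-2) ≠ 0 := by nlinarith
    have hdef : (gegenbauer d (n + 2)).eval 1 =
        (((d:ℝ) + 2*n + 2)/((n:ℝ)+2)) * ((gegenbauer d (n+1)).eval 1 -
          (((d:ℝ)+n-2)/((d:ℝ)+2*n-2)) * (gegenbauer d n).eval 1) := by
      simp [gegenbauer]
    have hdef' : ((n:ℝ)+2) * (((d:ℝ)+2*n-2) * (gegenbauer d (n+2)).eval 1) =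
        ((d:ℝ)+2*n+2) * (((d:ℝ)+2*n-2) * (gegenbauer d (n+1)).eval 1
          - ((d:ℝ)+n-2) * (gegenbauer d n).eval 1) := by
      have e1 : ((n:ℝ)+2) * (((d:ℝ) + 2*n + 2)/((n:ℝ)+2)) = (d:ℝ) + 2*n + 2 := by
        field_simp
      have e2 : ((d:ℝ)+2*n-2) * (((d:ℝ)+n-2)/((d:ℝ)+2*n-2)) = (d:ℝ)+n-2 := by
        field_simp
      rw [hdef]
      linear_combination (((d:ℝ)+2*n-2) * (gegenbauer d (n+1)).eval 1 - ((d:ℝ)+2*n-2) * (((d:ℝ)+n-2)/((d:ℝ)+2*n-2)) * (gegenbauer d n).eval 1) * e1 - ((d:ℝ) + 2*n + 2) * (gegenbauer d n).eval 1 * e2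
    push_cast
    refine mul_left_cancel₀ h3 ?_
    linear_combination (2*(n:ℝ)+d) * hdef' + ((2*(n:ℝ)+d+2)) * hrat

lemma X_mul_geg (d : ℕ) (hd : 3 ≤ d) (k : ℕ) :
    ∃ a c : ℝ, X * gegenbauer d k = C a * gegenbauer d (k + 1) + C c * gegenbauer d (k - 1) := by
  have hd3 : (3:ℝ) ≤ d := by exact_mod_cast hd
  cases k with
  | zero =>
    refine ⟨1/(d:ℝ), 0, ?_⟩
    have hdne : (d:ℝ) ≠ 0 := by intro h; rw [h] at hd3; norm_num at hd3
    have : (gegenbauer d 1) = C (d:ℝ) * X := rfl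
    have h0 : (gegenbauer d 0) = 1 := rfl
    rw [this, h0, ← mul_assoc, ← C_mul, one_div, inv_mul_cancel₀ hdne]
    simp
  | succ n =>
    refine ⟨((n:ℝ)+2)/((d:ℝ)+2*(n:ℝ)+2), ((d:ℝ)+(n:ℝ)-2)/((d:ℝ)+2*(n:ℝ)-2), ?_⟩
    have h1 : ((n:ℝ)+2) ≠ 0 := by positivity
    have h2 : ((d:ℝ)+2*(n:ℝ)+2) ≠ 0 := by positivity
    have hmain : gegenbauer d (n+2) =
        C (((d : ℝ) + 2 * (n : ℝ) + 2) / ((n : ℝ) + 2)) *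
          (X * gegenbauer d (n + 1) -
            C (((d : ℝ) + (n : ℝ) - 2) / ((d : ℝ) + 2 * (n : ℝ) - 2)) * gegenbauer d n) := rfl
    have hsucc : n + 1 + 1 = n + 2 := rfl
    have hsub : n + 1 - 1 = n := rfl
    rw [hsucc, hsub, hmain, ← mul_assoc, ← C_mul]
    have hac : ((n:ℝ)+2)/((d:ℝ)+2*(n:ℝ)+2) * (((d : ℝ) + 2 * (n : ℝ) + 2) / ((n : ℝ) + 2)) = 1 := by
      field_simp
    rw [hac, C_1, one_mul]
    ring

lemma pow_mul_geg (d : ℕ) (hd : 3 ≤ d) (j : ℕ) : ∀ m, m ≤ j →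
    X ^ m * gegenbauer d j ∈
      Submodule.span ℝ (gegenbauer d '' Set.Icc (j - m) (j + m)) := by
  intro m
  induction m with
  | zero => intro _; rw [pow_zero, one_mul]; exact Submodule.subset_span ⟨j, by simp, rfl⟩
  | succ m ih =>
    intro hm
    have ihm := ih (by omega)
    have hstep : ∀ p, p ∈ Submodule.span ℝ (gegenbauer d '' Set.Icc (j - m) (j + m)) →
        X * p ∈ Submodule.span ℝ (gegenbauer d '' Set.Icc (j - (m+1)) (j + (m+1))) := by
      intro p hp
      induction hp using Submodule.span_induction with
      | mem q hq =>
        obtain ⟨k, hk, rfl⟩ := hq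
        obtain ⟨hk1, hk2⟩ := hk
        obtain ⟨a, c, hac⟩ := X_mul_geg d hd k
        rw [hac]
        apply Submodule.add_mem
        · rw [← smul_eq_C_mul]
          exact Submodule.smul_mem _ _ (Submodule.subset_span ⟨k+1, ⟨by omega, by omega⟩, rfl⟩)
        · rw [← smul_eq_C_mul]
          exact Submodule.smul_mem _ _ (Submodule.subset_span ⟨k-1, ⟨by omega, by omega⟩, rfl⟩)
      | zero => simp
      | add x y hx hy ihx ihy => rw [mul_add]; exact Submodule.add_mem _ ihx ihy
      | smul a x hx ihx => rw [mul_smul_comm]; exact Submodule.smul_mem _ _ ihx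
    have : X ^ (m+1) * gegenbauer d j = X * (X ^ m * gegenbauer d j) := by ring
    rw [this]
    exact hstep _ ihm

lemma poly_mul_geg (d : ℕ) (hd : 3 ≤ d) (j s : ℕ) (hsj : s ≤ j)
    (F : Polynomial ℝ) (hF : F.natDegree ≤ s) :
    F * gegenbauer d j ∈
      Submodule.span ℝ (gegenbauer d '' Set.Icc (j - s) (j + s)) := by
  rw [F.as_sum_range' (s+1) (lt_of_le_of_lt hF (Nat.lt_succ_self s))]
  rw [Finset.sum_mul]
  apply Submodule.sum_mem
  intro m hm
  have hm' : m ≤ s := Nat.lt_succ_iff.mp (Finset.mem_range.mp hm)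
  have heq : (monomial m (F.coeff m)) * gegenbauer d j
      = (F.coeff m) • (X ^ m * gegenbauer d j) := by
    rw [← C_mul_X_pow_eq_monomial, smul_eq_C_mul]; ring
  rw [heq]
  apply Submodule.smul_mem
  exact Submodule.span_mono
    (Set.image_mono (Set.Icc_subset_Icc (by omega) (by omega)))
    (pow_mul_geg d hd j m (le_trans hm' hsj))

theorem stmt_14 (d : ℕ) (hd : 3 ≤ d)
    (X : Finset (EuclideanSpace ℝ (Fin d))) (hXne : X.Nonempty)
    (hsphere : ∀ x ∈ X, ‖x‖ = 1)
    (A : Finset ℝ)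
    (hA : (A : Set ℝ) = {α : ℝ | ∃ x ∈ X, ∃ y ∈ X, x ≠ y ∧ (inner ℝ x y : ℝ) = α})
    (s : ℕ) (hs : s = A.card)
    (b : ℕ → ℝ)
    (hb : ∀ k, b k = (1 / (X.card : ℝ)) *
      ∑ x ∈ X, ∑ y ∈ X, (gegenbauer d k).eval (inner ℝ x y : ℝ))
    (w t : ℕ) (ht : 1 ≤ t)
    (hw : 0 < b w)
    (hzero : ∀ k, w + 1 ≤ k → k ≤ w + t → b k = 0) :
    t ≤ 2 * s := by
  by_contra hcon
  push_neg at hcon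
  classical
  set j := w + s + 1 with hj
  set F : Polynomial ℝ := ∏ α ∈ A, (Polynomial.X - C α) with hFdef
  have hFdeg : F.natDegree ≤ s := by
    rw [hFdef, hs]
    rw [Polynomial.natDegree_prod _ _ (fun α _ => X_sub_C_ne_zero α)]
    simp [natDegree_X_sub_C]
  have hmem : F * gegenbauer d j ∈
      Submodule.span ℝ (gegenbauer d '' Set.Icc (j - s) (j + s)) :=
    poly_mul_geg d hd j s (by omega) F hFdeg
  have hXcard : (0:ℝ) < (X.card : ℝ) := by
    exact_mod_cast Finset.card_pos.mpr hXne
  -- the functional vanishes on the span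
  have hzeroSum : ∀ k, w + 1 ≤ k → k ≤ w + 2*s + 1 →
      (∑ x ∈ X, ∑ y ∈ X, (gegenbauer d k).eval (inner ℝ x y : ℝ)) = 0 := by
    intro k h1 h2
    have hbk := hzero k h1 (by omega)
    have hbb := hb k
    rw [hbk] at hbb
    have h0 := hbb.symm
    rcases mul_eq_zero.mp h0 with h | h
    · exfalso; rw [one_div] at h; exact (inv_ne_zero (ne_of_gt hXcard)) h
    · exact h
  have hvanish : ∀ p ∈ Submodule.span ℝ (gegenbauer d '' Set.Icc (j - s) (j + s)),
      (∑ x ∈ X, ∑ y ∈ X, p.eval (inner ℝ x y : ℝ)) = 0 := by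
    intro p hp
    induction hp using Submodule.span_induction with
    | mem q hq =>
      obtain ⟨k, hk, rfl⟩ := hq
      obtain ⟨hk1, hk2⟩ := hk
      exact hzeroSum k (by omega) (by omega)
    | zero => simp
    | add x y hx hy ihx ihy =>
      simp only [eval_add]
      rw [Finset.sum_congr rfl (fun x _ => Finset.sum_add_distrib), Finset.sum_add_distrib,
        ihx, ihy, add_zero]
    | smul a x hx ihx =>
      simp only [smul_eq_C_mul, eval_mul, eval_C]
      rw [Finset.sum_congr rfl (fun x _ => (Finset.mul_sum _ _ _).symm), ← Finset.mul_sum,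
        ihx, mul_zero]
  have hEq := hvanish _ hmem
  -- evaluate the sum directly
  have hdiag : ∀ x ∈ X, (inner ℝ x x : ℝ) = 1 := by
    intro x hx
    rw [real_inner_self_eq_norm_mul_norm, hsphere x hx]; norm_num
  have hoff : ∀ x ∈ X, ∀ y ∈ X, x ≠ y → F.eval (inner ℝ x y : ℝ) = 0 := by
    intro x hx y hy hxy
    have hmemA : (inner ℝ x y : ℝ) ∈ A := by
      rw [← Finset.mem_coe, hA]
      exact ⟨x, hx, y, hy, hxy, rfl⟩
    rw [hFdef, eval_prod]
    exact Finset.prod_eq_zero hmemA (by simp only [eval_sub, eval_X, eval_C, sub_self])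
  have hsum : (∑ x ∈ X, ∑ y ∈ X, (F * gegenbauer d j).eval (inner ℝ x y : ℝ))
      = (X.card : ℝ) * (F.eval 1 * (gegenbauer d j).eval 1) := by
    rw [Finset.sum_congr rfl (fun x hx => ?_)]
    · rw [Finset.sum_const, nsmul_eq_mul]
    · rw [Finset.sum_eq_single_of_mem x hx]
      · rw [hdiag x hx, eval_mul]
      · intro y hy hyx
        rw [eval_mul, hoff x hx y hy (Ne.symm hyx), zero_mul]
  have hF1 : F.eval 1 ≠ 0 := by
    rw [hFdef, eval_prod]
    apply Finset.prod_ne_zero_iff.mpr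
    intro α hα
    simp only [eval_sub, eval_X, eval_C]
    intro h
    have hα1 : α = 1 := by linarith
    rw [← Finset.mem_coe, hA] at hα
    obtain ⟨x, hx, y, hy, hxy, hxyα⟩ := hα
    apply hxy
    rw [← inner_eq_one_iff_of_norm_eq_one (𝕜 := ℝ) (hsphere x hx) (hsphere y hy)]
    rw [hxyα, hα1]
  have hQ1 : 0 < (gegenbauer d j).eval 1 := (geg_eval_one_pos d hd j).1
  rw [hsum] at hEq
  have : (X.card : ℝ) * (F.eval 1 * (gegenbauer d j).eval 1) ≠ 0 :=
    mul_ne_zero (ne_of_gt hXcard) (mul_ne_zero hF1 (ne_of_gt hQ1))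
  exact this hEq
end
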